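/- The recursive BuildTree algorithm, which given a sorted array of n distinct keys returns the tree whose root is the median element and whose left and right subtrees are built recursively from the left and right halves, produces a binary search tree that is perfectly balanced (for every node, left and right subtree sizes differ by at most 1) and contains exactly the keys of the array. -/

import Mathlib

inductive BTree (α : Type) where
  | leaf : BTree α
  | node : BTree α → α → BTree α → BTree α

def BTree.size {α : Type} : BTree α → ℕ
  | .leaf => 0
  | .node l _ r => l.size + r.size + 1

def BTree.keys {α : Type} : BTree α → List α
  | .leaf => []
  | .node l x r => l.keys ++ x :: r.keys

/-- Perfectly balanced: at every node, the left and right subtree sizes differ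
by at most 1. -/
def BTree.balanced {α : Type} : BTree α → Prop
  | .leaf => True
  | .node l _ r =>
      ((l.size : ℤ) - r.size).natAbs ≤ 1 ∧ l.balanced ∧ r.balanced

/-- Binary search tree property. -/
def BTree.isBST {α : Type} [LinearOrder α] : BTree α → Prop
  | .leaf => True
  | .node l x r =>
      (∀ y ∈ l.keys, y < x) ∧ (∀ y ∈ r.keys, x < y) ∧ l.isBST ∧ r.isBST

/-- `buildTree` from a sorted array: take the median as root and recursively
build the left and right subtrees from the two halves (Algorithm 4). -/
def buildTree {α : Type} (l : List α) : BTree α :=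
  if h : l.length = 0 then .leaf
  else
    let m := (l.length - 1) / 2
    .node (buildTree (l.take m)) (l.get ⟨m, by
        omega⟩)
      (buildTree (l.drop (m + 1)))
termination_by l.length
decreasing_by
  · simp [List.length_take]; omega
  · simp [List.length_drop]; omega

theorem keys_buildTree {α : Type} (l : List α) : (buildTree l).keys = l := by
  induction l using buildTree.induct with
  | case1 l h => rw [buildTree]; simp [h, BTree.keys, List.length_eq_zero_iff.mp h]
  | case2 l h m ih1 ih2 =>
      rw [buildTree]
      simp only [h, dite_false, BTree.keys]
      rw [ih1, ih2]
      rw [List.get_eq_getElem, List.getElem_cons_drop, List.take_append_drop]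

theorem size_eq_keys_length {α : Type} (t : BTree α) : t.size = t.keys.length := by
  induction t with
  | leaf => rfl
  | node l x r ihl ihr => simp [BTree.size, BTree.keys, ihl, ihr]; omega

theorem size_buildTree {α : Type} (l : List α) : (buildTree l).size = l.length := by
  rw [size_eq_keys_length, keys_buildTree]

theorem stmt_14 {α : Type} [LinearOrder α] (l : List α)
    (hsorted : l.Pairwise (· < ·)) :
    (buildTree l).isBST ∧ (buildTree l).balanced ∧
    (buildTree l).keys = l := by
  refine ⟨?_, ?_, keys_buildTree l⟩
  · induction l using buildTree.induct with
    | case1 l h => rw [buildTree]; simp [h, BTree.isBST]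
    | case2 l h m ih1 ih2 =>
        rw [buildTree]
        simp only [h, dite_false, BTree.isBST]
        have hm : m < l.length := by omega
        have hdec : l.take m ++ l.get ⟨m, hm⟩ :: l.drop (m + 1) = l := by
          rw [List.get_eq_getElem, List.getElem_cons_drop, List.take_append_drop]
        have hs : (l.take m ++ l.get ⟨m, hm⟩ :: l.drop (m + 1)).Pairwise (· < ·) := by
          rw [hdec]; exact hsorted
        rw [List.pairwise_append] at hs
        obtain ⟨h1, h2, h3⟩ := hs
        rw [List.pairwise_cons] at h2
        refine ⟨?_, ?_, ih1 h1, ih2 h2.2⟩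
        · intro y hy
          rw [keys_buildTree] at hy
          exact h3 y hy _ List.mem_cons_self
        · intro y hy
          rw [keys_buildTree] at hy
          exact h2.1 y hy
  · clear hsorted
    induction l using buildTree.induct with
    | case1 l h => rw [buildTree]; simp [h, BTree.balanced]
    | case2 l h m ih1 ih2 =>
        rw [buildTree]
        simp only [h, dite_false, BTree.balanced]
        refine ⟨?_, ih1, ih2⟩
        rw [size_buildTree, size_buildTree, List.length_take, List.length_drop]
        simp only [m] at *
        omega
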